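/- Let S be a monic subset of the free left k⟨X⟩-module Mod_{k⟨X⟩}⟨Y⟩ = ⊕_{y∈Y} k⟨X⟩y, with the ordering on X*Y defined by comparing the X*-parts by a monomial ordering and then the Y-letters. If every element f of the submodule k⟨X⟩·S generated by S has leading monomial of the form a·s̄ for some a ∈ X* and s ∈ S, then Irr(S) = {w ∈ X*Y : w ≠ a s̄ for all a ∈ X*, s ∈ S} is a k-linear basis of the quotient module Mod_{k⟨X⟩}⟨Y⟩ / k⟨X⟩·S. -/

import Mathlib

variable {k X Y : Type*} [Field k] [LinearOrder (FreeMonoid X)] [LinearOrder Y]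

/-- The free left `k⟨X⟩`-module with basis `Y`, with `k`-basis the set `X*Y`,
ordered lexicographically (first the `X*`-part, then the `Y`-letter). -/
abbrev FreeMod (k X Y : Type*) [Field k] := Lex (FreeMonoid X × Y) →₀ k

/-- The leading (maximal) monomial `f̄ ∈ X*Y` of a nonzero element. -/
noncomputable def lw (f : FreeMod k X Y) (hf : f ≠ 0) : Lex (FreeMonoid X × Y) :=
  f.support.max' (Finsupp.support_nonempty_iff.mpr hf)

/-- Left multiplication of an element of the free module by a monomial `a ∈ X*`. -/
noncomputable def shift (a : FreeMonoid X) (s : FreeMod k X Y) : FreeMod k X Y :=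
  Finsupp.mapDomain (fun p => toLex (a * (ofLex p).1, (ofLex p).2)) s

/-- The `k⟨X⟩`-submodule generated by `S`, as the `k`-span of `{a·s : a ∈ X*, s ∈ S}`. -/
noncomputable def modSpan (S : Set (FreeMod k X Y)) : Submodule k (FreeMod k X Y) :=
  Submodule.span k {x | ∃ (a : FreeMonoid X) (s : FreeMod k X Y), s ∈ S ∧ x = shift a s}

/-- `Irr S`: the monomials `w ∈ X*Y` not of the form `a·s̄` for `a ∈ X*`, `s ∈ S`. -/
def IrrMod (S : Set (FreeMod k X Y)) : Set (Lex (FreeMonoid X × Y)) :=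
  {w | ¬ ∃ (a : FreeMonoid X) (s : FreeMod k X Y) (_ : s ∈ S) (h0 : s ≠ 0),
    w = toLex (a * (ofLex (lw s h0)).1, (ofLex (lw s h0)).2)}

section Aux

/-- The monomial map `p ↦ a·p` on `X*Y`. -/
noncomputable def shiftMap (a : FreeMonoid X) (p : Lex (FreeMonoid X × Y)) :
    Lex (FreeMonoid X × Y) :=
  toLex (a * (ofLex p).1, (ofLex p).2)

theorem shiftMap_injective (a : FreeMonoid X) :
    Function.Injective (shiftMap (X := X) (Y := Y) a) := by
  intro p q h
  have h' := toLex.injective h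
  rw [Prod.mk.injEq] at h'
  exact ofLex.injective (Prod.ext (mul_left_cancel h'.1) h'.2)

theorem shiftMap_strictMono
    (hmul : ∀ (a : FreeMonoid X) (u v : FreeMonoid X), u < v → a * u < a * v)
    (a : FreeMonoid X) : StrictMono (shiftMap (X := X) (Y := Y) a) := by
  intro p q hpq
  have hpq' : toLex (ofLex p) < toLex (ofLex q) := hpq
  rcases Prod.Lex.lt_iff.mp hpq' with h | ⟨h1, h2⟩
  · exact Prod.Lex.lt_iff.mpr (Or.inl (hmul a _ _ h))
  · exact Prod.Lex.lt_iff.mpr (Or.inr ⟨congrArg (a * ·) h1, h2⟩)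

theorem shift_eq_mapDomain (a : FreeMonoid X) (s : FreeMod k X Y) :
    shift a s = Finsupp.mapDomain (shiftMap a) s := rfl

theorem shift_support (a : FreeMonoid X) (s : FreeMod k X Y) :
    (shift a s).support = s.support.image (shiftMap a) := by
  classical
  rw [shift_eq_mapDomain]
  exact Finsupp.mapDomain_support_of_injective (shiftMap_injective a) s

theorem shift_ne_zero (a : FreeMonoid X) {s : FreeMod k X Y} (hs : s ≠ 0) :
    shift a s ≠ 0 := by
  rw [← Finsupp.support_nonempty_iff, shift_support]
  exact ((Finsupp.support_nonempty_iff.mpr hs).image _)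

theorem lw_shift
    (hmul : ∀ (a : FreeMonoid X) (u v : FreeMonoid X), u < v → a * u < a * v)
    (a : FreeMonoid X) {s : FreeMod k X Y} (hs : s ≠ 0) :
    lw (shift a s) (shift_ne_zero a hs) = shiftMap a (lw s hs) := by
  classical
  have h : (shift a s).support = s.support.image (shiftMap a) := shift_support a s
  unfold lw
  apply le_antisymm
  · apply Finset.max'_le
    intro y hy
    rw [h, Finset.mem_image] at hy
    obtain ⟨u, hu, rfl⟩ := hy
    exact (shiftMap_strictMono hmul a).monotone (Finset.le_max' _ _ hu)
  · apply Finset.le_max'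
    rw [h]
    exact Finset.mem_image_of_mem _ (Finset.max'_mem _ _)

theorem shift_apply_shiftMap (a : FreeMonoid X) (s : FreeMod k X Y)
    (p : Lex (FreeMonoid X × Y)) : (shift a s) (shiftMap a p) = s p := by
  rw [shift_eq_mapDomain]
  exact Finsupp.mapDomain_apply (shiftMap_injective a) s p

end Aux

/-- Composition–Diamond lemma for modules, (ii) ⇒ (iii): if every nonzero element of the
submodule generated by the monic set `S` has leading monomial of the form `a·s̄`, then
`Irr S` is a `k`-linear basis of the quotient module. -/
theorem irrMod_basis_of_CD [WellFoundedLT (FreeMonoid X)] [WellFoundedLT Y]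
    (hmul : ∀ (a : FreeMonoid X) (u v : FreeMonoid X), u < v → a * u < a * v)
    (S : Set (FreeMod k X Y)) (hS0 : ∀ s ∈ S, s ≠ 0)
    (hmonic : ∀ (s) (hs : s ∈ S), s (lw s (hS0 s hs)) = 1)
    (hCD : ∀ f ∈ modSpan S, ∀ hf : f ≠ 0,
      ∃ (a : FreeMonoid X) (s : FreeMod k X Y) (hs : s ∈ S),
        lw f hf = toLex (a * (ofLex (lw s (hS0 s hs))).1, (ofLex (lw s (hS0 s hs))).2)) :
    LinearIndependent k (fun w : IrrMod S =>
      Submodule.Quotient.mk (p := modSpan S)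
        (Finsupp.single (w : Lex (FreeMonoid X × Y)) (1 : k))) ∧
    Submodule.span k (Set.range fun w : IrrMod S =>
      Submodule.Quotient.mk (p := modSpan S)
        (Finsupp.single (w : Lex (FreeMonoid X × Y)) (1 : k))) = ⊤ := by
  classical
  -- Key fact: a member of `modSpan S` supported on `Irr S` is zero.
  have key : ∀ f ∈ modSpan S, (↑f.support ⊆ IrrMod S) → f = 0 := by
    intro f hf hsupp
    by_contra hne
    obtain ⟨a, s, hs, heq⟩ := hCD f hf hne
    exact hsupp (Finset.max'_mem _ _ : lw f hne ∈ f.support)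
      ⟨a, s, hs, hS0 s hs, heq⟩
  constructor
  · -- linear independence
    have h1 : LinearIndependent k
        (fun w : IrrMod S => Finsupp.single (w : Lex (FreeMonoid X × Y)) (1 : k)) := by
      have := (Finsupp.basisSingleOne (R := k) (ι := Lex (FreeMonoid X × Y))).linearIndependent
      have h := this.comp (Subtype.val : IrrMod S → Lex (FreeMonoid X × Y))
        Subtype.val_injective
      simpa [Function.comp_def] using h
    have hrange : (Set.range fun w : IrrMod S =>
        Finsupp.single (w : Lex (FreeMonoid X × Y)) (1 : k))
        = (fun i => Finsupp.single i (1 : k)) '' (IrrMod S) := by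
      rw [show (fun w : IrrMod S => Finsupp.single (w : Lex (FreeMonoid X × Y)) (1 : k))
          = (fun i : Lex (FreeMonoid X × Y) => Finsupp.single i (1 : k)) ∘ Subtype.val from rfl,
        Set.range_comp, Subtype.range_coe]
    have hdisj : Disjoint (Submodule.span k (Set.range fun w : IrrMod S =>
        Finsupp.single (w : Lex (FreeMonoid X × Y)) (1 : k)))
        (LinearMap.ker (modSpan S).mkQ) := by
      rw [Submodule.ker_mkQ, Submodule.disjoint_def]
      intro x hx1 hx2
      rw [hrange, ← Finsupp.supported_eq_span_single, Finsupp.mem_supported] at hx1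
      exact key x hx2 hx1
    exact h1.map hdisj
  · -- spanning
    rw [eq_top_iff]
    set T := Submodule.span k (Set.range fun w : IrrMod S =>
      Submodule.Quotient.mk (p := modSpan S)
        (Finsupp.single (w : Lex (FreeMonoid X × Y)) (1 : k))) with hT
    have hgen : ∀ f : FreeMod k X Y,
        (∀ u ∈ f.support, Submodule.Quotient.mk (p := modSpan S)
          (Finsupp.single u (1 : k)) ∈ T) →
        Submodule.Quotient.mk (p := modSpan S) f ∈ T := by
      intro f hf
      have hfeq : f = ∑ u ∈ f.support, (f u) • Finsupp.single u (1 : k) := by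
        conv_lhs => rw [← Finsupp.sum_single f]
        rw [Finsupp.sum]
        refine Finset.sum_congr rfl fun u _ => ?_
        rw [Finsupp.smul_single, smul_eq_mul, mul_one]
      rw [hfeq, show (Submodule.Quotient.mk (p := modSpan S)
          (∑ u ∈ f.support, (f u) • Finsupp.single u (1 : k)))
          = (modSpan S).mkQ (∑ u ∈ f.support, (f u) • Finsupp.single u (1 : k)) from rfl,
        map_sum]
      refine Submodule.sum_mem _ fun u hu => ?_
      rw [map_smul]
      exact Submodule.smul_mem _ _ (hf u hu)
    have mono : ∀ w : Lex (FreeMonoid X × Y),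
        Submodule.Quotient.mk (p := modSpan S) (Finsupp.single w (1 : k)) ∈ T := by
      intro w
      induction w using WellFoundedLT.induction with
      | _ w IH =>
        by_cases hw : w ∈ IrrMod S
        · exact Submodule.subset_span ⟨⟨w, hw⟩, rfl⟩
        · rw [IrrMod, Set.mem_setOf_eq, not_not] at hw
          obtain ⟨a, s, hs, h0, rfl⟩ := hw
          set w := shiftMap a (lw s h0) with hwdef
          have hg0 : shift a s ≠ 0 := shift_ne_zero a h0
          have hgspan : shift a s ∈ modSpan S :=
            Submodule.subset_span ⟨a, s, hs, rfl⟩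
          have hlwg : lw (shift a s) hg0 = w := lw_shift hmul a h0
          have hgw : (shift a s) w = 1 := by
            rw [hwdef, shift_apply_shiftMap]
            exact hmonic s hs
          set h : FreeMod k X Y := shift a s - Finsupp.single w (1 : k) with hhdef
          have hhw : h w = 0 := by
            rw [hhdef, Finsupp.sub_apply, hgw, Finsupp.single_eq_same]
            ring
          have hhsupp : ∀ u ∈ h.support, u < w := by
            intro u hu
            have hune : u ≠ w := fun he => by
              rw [he] at hu; exact (Finsupp.mem_support_iff.mp hu) hhw
            have : u ∈ (shift a s).support ∪ (Finsupp.single w (1 : k)).support :=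
              Finsupp.support_sub hu
            rcases Finset.mem_union.mp this with hu' | hu'
            · have hle : u ≤ lw (shift a s) hg0 := Finset.le_max' _ _ hu'
              rw [hlwg] at hle
              exact lt_of_le_of_ne hle hune
            · exact absurd ((Finsupp.mem_support_single _ _ _).mp hu').1 hune
          have hmkh : Submodule.Quotient.mk (p := modSpan S) h ∈ T :=
            hgen h fun u hu => IH u (hhsupp u hu)
          have hmkg : Submodule.Quotient.mk (p := modSpan S) (shift a s) = 0 :=
            (Submodule.Quotient.mk_eq_zero _).mpr hgspan
          have : Submodule.Quotient.mk (p := modSpan S) (Finsupp.single w (1 : k))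
              = Submodule.Quotient.mk (p := modSpan S) (shift a s)
                - Submodule.Quotient.mk (p := modSpan S) h := by
            rw [← Submodule.Quotient.mk_sub, hhdef, sub_sub_cancel]
          have goal : Submodule.Quotient.mk (p := modSpan S)
              (Finsupp.single w (1 : k)) ∈ T := by
            rw [this, hmkg, zero_sub]
            exact Submodule.neg_mem _ hmkh
          exact goal
    intro x _
    obtain ⟨f, rfl⟩ := Submodule.Quotient.mk_surjective (modSpan S) x
    exact hgen f fun u _ => mono u
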